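/- Let ν ≤ κ be infinite cardinals and L a set with κ ≤ |L| ≤ 2^κ. Then there exists a set H of functions from L to κ with |H| ≤ κ^{<ν} such that every partial function from L to κ whose domain has cardinality < ν is extended by some member of H. -/

import Mathlib

open Cardinal

universe u

set_option maxHeartbeats 1000000
set_option synthInstance.maxHeartbeats 400000

open Set Ordinal in
/-- A set of size at most `#α` can be covered by the range of a function from `α`. -/
private lemma ek_cover {α β : Type u} (b₀ : β) (s : Set β) (hs : #s ≤ #α) :
    ∃ g : α → β, s ⊆ Set.range g := by
  obtain ⟨emb⟩ : Nonempty (s ↪ α) := (Cardinal.le_def _ _).1 hs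
  classical
  refine ⟨fun a => if h : ∃ y : s, emb y = a then ((h.choose : s) : β) else b₀, ?_⟩
  intro y hy
  have h : ∃ y' : s, emb y' = emb ⟨y, hy⟩ := ⟨⟨y, hy⟩, rfl⟩
  refine ⟨emb ⟨y, hy⟩, ?_⟩
  dsimp only
  rw [dif_pos h]
  have : h.choose = ⟨y, hy⟩ := emb.injective h.choose_spec
  rw [this]

/-- There is a point of `ν.ord.ToType` whose set of predecessors has any given
cardinality `< ν`. -/
private lemma ek_exists_t (ν μ' : Cardinal.{u}) (h : μ' < ν) :
    ∃ t : ν.ord.ToType, #(Set.Iio t) = μ' := by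
  letI : IsWellOrder ν.ord.ToType (· < ·) := isWellOrder_lt
  have htype := Ordinal.type_toType ν.ord
  have hlt := (Cardinal.ord_lt_ord.2 h).trans_eq htype.symm
  refine ⟨Ordinal.enum (· < ·) ⟨μ'.ord, hlt⟩, ?_⟩
  have h1 := Ordinal.card_typein (r := ((· < ·) : ν.ord.ToType → ν.ord.ToType → Prop))
    (Ordinal.enum (· < ·) ⟨μ'.ord, hlt⟩)
  rw [Ordinal.typein_enum, Cardinal.card_ord] at h1
  exact h1.symm

open Set in
/-- Index type for the Engelking–Karłowicz family. -/
private def EKIdx (ν : Cardinal.{u}) (K : Type u) : Type u :=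
  Σ t : ν.ord.ToType, (Iio t → K) × (Iio t → (Iio t → Prop)) × (Iio t → K)

open Set Classical in
/-- The function associated to an index. -/
private noncomputable def EKFun {K L : Type u} {ν : Cardinal.{u}} (j : L → Set K) (k₀ : K)
    (i : EKIdx ν K) : L → K :=
  fun x => if hx : ∃ a, i.2.2.1 a = (fun b => i.2.1 b ∈ j x) then i.2.2.2 hx.choose else k₀

/-- Engelking–Karłowicz. Let `ν ≤ κ = |K|` be infinite cardinals and
`L` a set with `κ ≤ |L| ≤ 2^κ`. Then there is a set `H` of functions from `L` to `K`
with `|H| ≤ κ^{<ν}` such that every partial function from `L` to `K` whose domain has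
cardinality `< ν` is extended by some member of `H`. -/
theorem stmt13 {K L : Type u} (ν : Cardinal.{u}) (hν : ℵ₀ ≤ ν) (hνκ : ν ≤ #K)
    (hκL : #K ≤ #L) (hL : #L ≤ 2 ^ #K) :
    ∃ H : Set (L → K), #H ≤ (#K) ^< ν ∧
      ∀ (D : Set L) (f : D → K), #D < ν → ∃ h ∈ H, ∀ x : D, h x = f x := by
  classical
  have hκ : ℵ₀ ≤ #K := hν.trans hνκ
  obtain ⟨k₀⟩ : Nonempty K := mk_ne_zero_iff.1 (aleph0_pos.trans_le hκ).ne'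
  obtain ⟨j⟩ : Nonempty (L ↪ Set K) := (Cardinal.le_def _ _).1 (by rwa [mk_set])
  have h1ν : (1 : Cardinal) < ν := one_lt_aleph0.trans_le hν
  have hκA : #K ≤ (#K) ^< ν := by
    simpa using le_powerlt (#K) h1ν
  have hA0 : ℵ₀ ≤ (#K) ^< ν := hκ.trans hκA
  refine ⟨Set.range (EKFun (ν := ν) (fun x => j x) k₀), ?_, ?_⟩
  · -- counting
    refine mk_range_le.trans ?_
    have key : ∀ t : ν.ord.ToType,
        #((Set.Iio t → K) × (Set.Iio t → (Set.Iio t → Prop)) × (Set.Iio t → K))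
          ≤ (#K) ^< ν := by
      intro t
      have hμ : #(Set.Iio t) < ν := Cardinal.mk_Iio_ord_toType t
      have hμμ : #(Set.Iio t) * #(Set.Iio t) < ν := Cardinal.mul_lt_of_lt hν hμ hμ
      have h1 : #(Set.Iio t → K) ≤ (#K) ^< ν := by
        rw [← Cardinal.power_def]
        exact le_powerlt _ hμ
      have h2 : #(Set.Iio t → (Set.Iio t → Prop)) ≤ (#K) ^< ν := by
        rw [← Cardinal.power_def]
        have : #(Set.Iio t → Prop) = 2 ^ #(Set.Iio t) :=
          Cardinal.mk_set (α := ↥(Set.Iio t))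
        rw [this, ← power_mul]
        calc (2 : Cardinal) ^ (#(Set.Iio t) * #(Set.Iio t))
            ≤ (#K) ^ (#(Set.Iio t) * #(Set.Iio t)) :=
              power_le_power_right (by exact (nat_lt_aleph0 2).le.trans hκ)
          _ ≤ (#K) ^< ν := le_powerlt _ hμμ
      calc #((Set.Iio t → K) × (Set.Iio t → (Set.Iio t → Prop)) × (Set.Iio t → K))
          = #(Set.Iio t → K) * (#(Set.Iio t → (Set.Iio t → Prop)) * #(Set.Iio t → K)) := by
            simp [mk_prod]
        _ ≤ (#K) ^< ν * ((#K) ^< ν * (#K) ^< ν) := by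
            gcongr
        _ = (#K) ^< ν := by
            rw [mul_eq_self hA0, mul_eq_self hA0]
    calc #(EKIdx ν K) = Cardinal.sum fun t : ν.ord.ToType =>
          #((Set.Iio t → K) × (Set.Iio t → (Set.Iio t → Prop)) × (Set.Iio t → K)) :=
          mk_sigma _
      _ ≤ Cardinal.sum fun _ : ν.ord.ToType => (#K) ^< ν := Cardinal.sum_le_sum _ _ key
      _ = #ν.ord.ToType * (#K) ^< ν := sum_const' _ _
      _ = ν * (#K) ^< ν := by rw [mk_ord_toType]
      _ ≤ (#K) ^< ν * (#K) ^< ν := by gcongr; exact hνκ.trans hκA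
      _ = (#K) ^< ν := mul_eq_self hA0
  · -- extension property
    intro D f hD
    -- separators
    have sep : ∀ x y : D, ∃ k : K, (x : L) ≠ (y : L) → ¬(k ∈ j x ↔ k ∈ j y) := by
      intro x y
      by_cases hxy : (x : L) = (y : L)
      · exact ⟨k₀, fun h => absurd hxy h⟩
      · have hjxy : j (x : L) ≠ j (y : L) := fun h => hxy (j.injective h)
        by_contra hcon
        push_neg at hcon
        exact hjxy (Set.ext fun k => (hcon k).2)
    choose c hc using sep
    have h1 : #(Set.range fun p : D × D => c p.1 p.2) < ν :=
      mk_range_le.trans_lt (by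
        simp only [mk_prod, lift_id]
        exact Cardinal.mul_lt_of_lt hν hD hD)
    have hS : #(insert k₀ (Set.range fun p : D × D => c p.1 p.2) : Set K) < ν :=
      mk_insert_le.trans_lt (Cardinal.add_lt_of_lt hν h1 h1ν)
    set S : Set K := insert k₀ (Set.range fun p : D × D => c p.1 p.2) with hSdef
    set μ' : Cardinal := max (max (#S) (#D)) 1 with hμ'def
    have hμ'ν : μ' < ν := max_lt (max_lt hS hD) h1ν
    obtain ⟨t, hIio⟩ := ek_exists_t ν μ' hμ'ν
    have hne : Nonempty (Set.Iio t) := mk_ne_zero_iff.1 (by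
      rw [hIio]
      exact (zero_lt_one.trans_le (le_max_right _ _)).ne')
    -- σ covering S
    obtain ⟨σ, hσ⟩ : ∃ σ : Set.Iio t → K, S ⊆ Set.range σ := by
      apply ek_cover k₀
      rw [hIio]; exact le_max_of_le_left (le_max_left _ _)
    -- traces
    set tr : D → (Set.Iio t → Prop) := fun x b => σ b ∈ j (x : L) with htrdef
    have trinj : ∀ x y : D, tr x = tr y → x = y := by
      intro x y hxy
      by_contra hne'
      have hxyL : (x : L) ≠ (y : L) := fun h => hne' (Subtype.ext h)
      have hcS : c x y ∈ S := Set.mem_insert_of_mem _ ⟨(x, y), rfl⟩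
      obtain ⟨b, hb⟩ := hσ hcS
      have : tr x b = tr y b := by rw [hxy]
      rw [htrdef] at this
      simp only [hb] at this
      exact hc x y hxyL (by rw [this])
    -- w covering traces
    obtain ⟨w, hw⟩ : ∃ w : Set.Iio t → (Set.Iio t → Prop),
        Set.range tr ⊆ Set.range w := by
      apply ek_cover (fun _ => False)
      refine mk_range_le.trans ?_
      rw [hIio]; exact le_max_of_le_left (le_max_right _ _)
    -- e
    obtain ⟨e, he⟩ : ∃ e : Set.Iio t → K,
        ∀ (a) (h : ∃ x : D, tr x = w a), e a = f h.choose :=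
      ⟨fun a => if h : ∃ x : D, tr x = w a then f h.choose else k₀,
        fun a h => dif_pos h⟩
    set i : EKIdx ν K := ⟨t, σ, w, e⟩ with hidef
    refine ⟨EKFun (ν := ν) (fun x => j x) k₀ i, Set.mem_range_self i, ?_⟩
    intro x
    have hx : ∃ a, w a = (fun b => σ b ∈ j (x : L)) := hw ⟨x, rfl⟩
    have hFi : EKFun (ν := ν) (fun x => j x) k₀ i (x : L) = e hx.choose := by
      rw [EKFun, dif_pos hx]
    rw [hFi]
    have hwx : w hx.choose = tr x := hx.choose_spec
    have hex : ∃ x' : D, tr x' = w hx.choose := ⟨x, hwx.symm⟩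
    rw [he hx.choose hex]
    have : hex.choose = x := trinj _ _ (hex.choose_spec.trans hwx)
    rw [this]
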